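/- Let K be a field and L/K an algebraic field extension. Then p̃(K) ≥ p'(L), where p̃(K) = sup{p'(F) : F/K a function field in one variable} and p'(L) = p(L) if L is real or char L = 2, and p'(L) = s(L) + 1 otherwise. -/

import Mathlib

/-- `a` is a sum of `n` squares in `R`. -/
def IsSumSqN {R : Type*} [CommRing R] (n : ℕ) (a : R) : Prop :=
  ∃ x : Fin n → R, a = ∑ i, x i ^ 2

/-- `a` is a sum of squares in `R`. -/
def IsSOS {R : Type*} [CommRing R] (a : R) : Prop := ∃ n, IsSumSqN n a

/-- The level `s(R)`. -/
noncomputable def levelN (R : Type*) [CommRing R] : ℕ∞ :=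
  sInf {n : ℕ∞ | ∃ m : ℕ, (m : ℕ∞) = n ∧ IsSumSqN m (-1 : R)}

/-- The Pythagoras number `p(R)`. -/
noncomputable def pythNum (R : Type*) [CommRing R] : ℕ∞ :=
  sInf {n : ℕ∞ | ∃ m : ℕ, (m : ℕ∞) = n ∧ ∀ a : R, IsSOS a → IsSumSqN m a}

open Classical in
/-- The modified Pythagoras number `p'(R)`. -/
noncomputable def pythNum' (R : Type*) [CommRing R] : ℕ∞ :=
  if ¬ IsSOS (-1 : R) ∨ ringChar R = 2 then pythNum R else levelN R + 1

/-- `F/k` is a function field in one variable: finitely generated of transcendence degree 1. -/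
def IsFunctionField1 (k F : Type*) [Field k] [Field F] [Algebra k F] : Prop :=
  (∃ s : Finset F, IntermediateField.adjoin k (s : Set F) = ⊤) ∧
  ∃ x : F, Transcendental k x ∧
    Algebra.IsAlgebraic (IntermediateField.adjoin k {x}) F

/-- `p̃(K)`: the supremum of `p'(F)` over all function fields in one variable `F/K`
(every such field is `K`-isomorphic to an intermediate field of an algebraic closure of
`K(X)`). -/
noncomputable def pTilde (K : Type*) [Field K] : ℕ∞ :=
  ⨆ (E : IntermediateField K (AlgebraicClosure (RatFunc K)))
    (_ : IsFunctionField1 K ↥E), pythNum' ↥E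

universe u

section Basic

variable {R S : Type*} [CommRing R] [CommRing S]

theorem IsSumSqN.map {n : ℕ} {a : R} (f : R →+* S) (h : IsSumSqN n a) :
    IsSumSqN n (f a) := by
  obtain ⟨x, rfl⟩ := h
  exact ⟨fun i => f (x i), by simp [map_sum]⟩

theorem IsSOS.map {a : R} (f : R →+* S) (h : IsSOS a) : IsSOS (f a) := by
  obtain ⟨n, h⟩ := h; exact ⟨n, h.map f⟩

theorem IsSumSqN.mono {n m : ℕ} {a : R} (h : IsSumSqN n a) (hnm : n ≤ m) :
    IsSumSqN m a := by
  obtain ⟨x, rfl⟩ := h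
  obtain ⟨k, rfl⟩ := Nat.exists_eq_add_of_le hnm
  refine ⟨Fin.append x 0, ?_⟩
  rw [Fin.sum_univ_add]
  simp [Fin.append]

end Basic

open Polynomial in
theorem coeff_sq_two_mul {M : Type*} [Field M] {p : M[X]} {D : ℕ} (hp : p.natDegree ≤ D) :
    (p ^ 2).coeff (2 * D) = (p.coeff D) ^ 2 := by
  rw [sq, sq, coeff_mul]
  rw [Finset.sum_eq_single (D, D)]
  · intro b hb hne
    rw [Finset.HasAntidiagonal.mem_antidiagonal] at hb
    rcases lt_or_ge D b.1 with h | h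
    · rw [coeff_eq_zero_of_natDegree_lt (lt_of_le_of_lt hp h), zero_mul]
    · have : D < b.2 := by
        rcases lt_or_eq_of_le h with h' | h'
        · omega
        · exfalso; apply hne; have : b.2 = D := by omega
          exact Prod.ext h' this
      rw [coeff_eq_zero_of_natDegree_lt (lt_of_le_of_lt hp this), mul_zero]
  · intro h
    exfalso; apply h; rw [Finset.HasAntidiagonal.mem_antidiagonal]; ring

open Polynomial in
theorem lemmaA {M : Type*} [Field M] {n : ℕ} (p : Fin (n + 1) → M[X])
    (hsum : ∑ i, (p i) ^ 2 = 0) (j₀ : Fin (n + 1)) (hj₀ : p j₀ ≠ 0) :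
    IsSumSqN n (-1 : M) := by
  -- pick j maximizing natDegree among nonzero p i
  classical
  obtain ⟨j, hjmem, hjmax⟩ := Finset.exists_max_image
    (Finset.univ.filter fun i => p i ≠ 0) (fun i => (p i).natDegree)
    ⟨j₀, by simp [hj₀]⟩
  rw [Finset.mem_filter] at hjmem
  have hj : p j ≠ 0 := hjmem.2
  set D := (p j).natDegree with hD
  have hdeg : ∀ i, (p i).natDegree ≤ D := by
    intro i
    by_cases hi : p i = 0
    · simp [hi]
    · exact hjmax i (by simp [hi])
  have hcoeff : ∑ i, (p i).coeff D ^ 2 = 0 := by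
    have := congrArg (fun q => Polynomial.coeff q (2 * D)) hsum
    simpa [Polynomial.finset_sum_coeff, coeff_sq_two_mul (hdeg _)] using this
  have hcj : (p j).coeff D ≠ 0 := by
    rw [hD]; exact Polynomial.leadingCoeff_ne_zero.mpr hj
  refine ⟨fun i => (p (j.succAbove i)).coeff D / (p j).coeff D, ?_⟩
  have h2 : (p j).coeff D ^ 2 ≠ 0 := pow_ne_zero _ hcj
  rw [Fin.sum_univ_succAbove (fun i => (p i).coeff D ^ 2) j] at hcoeff
  simp only [div_pow]
  rw [← Finset.sum_div, eq_div_iff h2]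
  linear_combination -hcoeff

section Descent

open Polynomial

variable {M : Type*} [Field M]

theorem exists_common_denom {n : ℕ} (f : Fin n → RatFunc M) :
    ∃ (d : M[X]) (p : Fin n → M[X]), d ≠ 0 ∧
      ∀ i, f i * algebraMap M[X] (RatFunc M) d = algebraMap M[X] (RatFunc M) (p i) := by
  classical
  refine ⟨∏ j, (f j).denom, fun i => (f i).num * ∏ j ∈ Finset.univ.erase i, (f j).denom,
    Finset.prod_ne_zero_iff.mpr fun j _ => RatFunc.denom_ne_zero _, fun i => ?_⟩
  have hprod : (∏ j, (f j).denom) = (f i).denom * ∏ j ∈ Finset.univ.erase i, (f j).denom :=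
    (Finset.mul_prod_erase _ _ (Finset.mem_univ i)).symm
  have h1 := RatFunc.num_div_denom (f i)
  rw [div_eq_iff (RatFunc.algebraMap_ne_zero (RatFunc.denom_ne_zero (f i)))] at h1
  rw [hprod, map_mul, map_mul, ← mul_assoc, ← h1]

/-- Level descent from `RatFunc M` to `M`. -/
theorem isSumSqN_neg_one_descent {n : ℕ} (h : IsSumSqN n (-1 : RatFunc M)) :
    IsSumSqN n (-1 : M) := by
  obtain ⟨x, hx⟩ := h
  obtain ⟨d, p, hd, hp⟩ := exists_common_denom x
  have key : (algebraMap M[X] (RatFunc M)) (d ^ 2 + ∑ i, p i ^ 2) = 0 := by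
    rw [map_add, map_sum, map_pow]
    have : ∀ i, algebraMap M[X] (RatFunc M) (p i ^ 2)
        = x i ^ 2 * algebraMap M[X] (RatFunc M) d ^ 2 := by
      intro i; rw [map_pow, ← hp i, mul_pow]
    rw [Finset.sum_congr rfl fun i _ => this i, ← Finset.sum_mul, ← hx]
    ring
  have hpoly : d ^ 2 + ∑ i, p i ^ 2 = 0 := by
    apply RatFunc.algebraMap_injective
    rw [key, map_zero]
  refine lemmaA (Fin.cons d p) ?_ 0 (by simpa using hd)
  rw [Fin.sum_univ_succ]
  simpa using hpoly

/-- Descent of constants: if `a : M` is a sum of `n` squares in `RatFunc M` and `M` is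
infinite, then `a` is a sum of `n` squares in `M`. -/
theorem isSumSqN_const_descent [Infinite M] {n : ℕ} {a : M}
    (h : IsSumSqN n (algebraMap M (RatFunc M) a)) : IsSumSqN n a := by
  obtain ⟨x, hx⟩ := h
  obtain ⟨d, p, hd, hp⟩ := exists_common_denom x
  have key : (algebraMap M[X] (RatFunc M)) (Polynomial.C a * d ^ 2) =
      (algebraMap M[X] (RatFunc M)) (∑ i, p i ^ 2) := by
    rw [map_mul, map_sum, map_pow, RatFunc.algebraMap_C, ← RatFunc.algebraMap_eq_C, hx]
    have : ∀ i, algebraMap M[X] (RatFunc M) (p i ^ 2)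
        = x i ^ 2 * algebraMap M[X] (RatFunc M) d ^ 2 := by
      intro i; rw [map_pow, ← hp i, mul_pow]
    rw [Finset.sum_congr rfl fun i _ => this i, ← Finset.sum_mul]
  have hpoly : Polynomial.C a * d ^ 2 = ∑ i, p i ^ 2 := RatFunc.algebraMap_injective M key
  obtain ⟨c, hc⟩ := d.exists_eval_ne_zero_of_natDegree_lt_card hd
    (lt_of_lt_of_le (Cardinal.nat_lt_aleph0 _) (Cardinal.infinite_iff.mp ‹Infinite M›))
  have heval := congrArg (Polynomial.eval c) hpoly
  simp only [Polynomial.eval_mul, Polynomial.eval_pow, Polynomial.eval_C,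
    Polynomial.eval_finset_sum] at heval
  refine ⟨fun i => (p i).eval c / d.eval c, ?_⟩
  simp only [div_pow]
  rw [← Finset.sum_div, eq_div_iff (pow_ne_zero _ hc), heval]

end Descent

section Transfer

variable {R S : Type*} [CommRing R] [CommRing S]

theorem IsSumSqN.of_equiv (e : R ≃+* S) {n : ℕ} {a : R} :
    IsSumSqN n (e a) ↔ IsSumSqN n a :=
  ⟨fun h => by simpa using h.map e.symm.toRingHom, fun h => h.map e.toRingHom⟩

theorem IsSOS.of_equiv (e : R ≃+* S) {a : R} : IsSOS (e a) ↔ IsSOS a := by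
  unfold IsSOS; simp_rw [IsSumSqN.of_equiv e]

theorem levelN_eq_of_equiv (e : R ≃+* S) : levelN R = levelN S := by
  unfold levelN
  congr 1
  ext n
  constructor
  · rintro ⟨m, rfl, h⟩
    exact ⟨m, rfl, by simpa using h.map e.toRingHom⟩
  · rintro ⟨m, rfl, h⟩
    exact ⟨m, rfl, by simpa using h.map e.symm.toRingHom⟩

theorem pythNum_eq_of_equiv (e : R ≃+* S) : pythNum R = pythNum S := by
  unfold pythNum
  congr 1
  ext n
  constructor
  · rintro ⟨m, rfl, h⟩
    refine ⟨m, rfl, fun b hb => ?_⟩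
    have : IsSOS (e.symm b) := by
      rw [← IsSOS.of_equiv e, e.apply_symm_apply]; exact hb
    simpa using (h _ this).map e.toRingHom
  · rintro ⟨m, rfl, h⟩
    refine ⟨m, rfl, fun b hb => ?_⟩
    have : IsSOS (e b) := (IsSOS.of_equiv e).mpr hb
    simpa using (h _ this).map e.symm.toRingHom

theorem ringChar_eq_of_equiv (e : R ≃+* S) : ringChar R = ringChar S := by
  have : CharP S (ringChar R) := by
    constructor
    intro n
    rw [← map_natCast (e : R →+* S) n, map_eq_zero_iff (e : R →+* S) e.injective]
    exact ringChar.spec R n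
  exact (ringChar.eq S (ringChar R)).symm

theorem pythNum'_eq_of_equiv (e : R ≃+* S) : pythNum' R = pythNum' S := by
  unfold pythNum'
  have h1 : IsSOS (-1 : R) ↔ IsSOS (-1 : S) := by
    rw [← IsSOS.of_equiv e, map_neg, map_one]
  rw [levelN_eq_of_equiv e, pythNum_eq_of_equiv e, ringChar_eq_of_equiv e]
  by_cases h : ¬ IsSOS (-1 : S) ∨ ringChar S = 2
  · rw [if_pos, if_pos h]; tauto
  · rw [if_neg, if_neg h]; tauto

end Transfer

section OrderLemmas

variable {R : Type*} [CommRing R]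

theorem levelN_le {m : ℕ} (h : IsSumSqN m (-1 : R)) : levelN R ≤ m :=
  sInf_le ⟨m, rfl, h⟩

theorem pythNum_le {m : ℕ} (h : ∀ a : R, IsSOS a → IsSumSqN m a) : pythNum R ≤ m :=
  sInf_le ⟨m, rfl, h⟩

theorem le_levelN {m : ℕ} (h : ∀ k : ℕ, IsSumSqN k (-1 : R) → m ≤ k) : (m : ℕ∞) ≤ levelN R :=
  le_sInf (by rintro b ⟨k, rfl, hk⟩; exact_mod_cast h k hk)

theorem lt_pythNum {n : ℕ} (a : R) (ha : IsSOS a) (h : ¬ IsSumSqN n a) :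
    (n : ℕ∞) < pythNum R := by
  have hle : (((n + 1 : ℕ)) : ℕ∞) ≤ pythNum R := by
    apply le_sInf
    rintro b ⟨m, rfl, hm⟩
    have : ¬ m ≤ n := fun hmn => h ((hm a ha).mono hmn)
    exact_mod_cast Nat.succ_le_of_lt (by omega)
  exact lt_of_lt_of_le (by exact_mod_cast Nat.lt_succ_self n) hle

theorem one_le_pythNum [Nontrivial R] : 1 ≤ pythNum R := by
  have h0 : ¬ IsSumSqN 0 (1 : R) := by
    rintro ⟨x, hx⟩
    simp at hx
  have := lt_pythNum (1 : R) ⟨1, fun _ => 1, by simp⟩ h0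
  simpa using Order.add_one_le_of_lt this
theorem one_le_pythNum' {F : Type*} [Field F] : 1 ≤ pythNum' F := by
  unfold pythNum'
  split
  · exact one_le_pythNum
  · exact le_add_self

end OrderLemmas

section Embed

open Polynomial IntermediateField

theorem ratFunc_le_pTilde (K : Type u) [Field K] (M : Type u) [Field M] [Algebra K M]
    [FiniteDimensional K M] : pythNum' (RatFunc M) ≤ pTilde K := by
  classical
  set Ω := AlgebraicClosure (RatFunc K) with hΩ
  -- embed M into Ω over K
  let ψ : M →ₐ[K] Ω := IsAlgClosed.lift
  have ψinj : Function.Injective ψ := ψ.toRingHom.injective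
  -- the transcendental element
  set t : Ω := algebraMap (RatFunc K) Ω RatFunc.X with hts
  have ht : Transcendental K t := by
    have h1 : Transcendental K (Polynomial.X : K[X]) := Polynomial.transcendental_X K
    have h2 : Transcendental K (RatFunc.X : RatFunc K) := by
      rw [← RatFunc.algebraMap_X]
      exact (transcendental_algebraMap_iff (RatFunc.algebraMap_injective K)).mpr h1
    exact (transcendental_algebraMap_iff (algebraMap (RatFunc K) Ω).injective).mpr h2
  -- the evaluation homomorphism on polynomials
  set θ : M[X] →+* Ω := eval₂RingHom ψ.toRingHom t with hθdef
  -- ψ into its field range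
  set N : IntermediateField K Ω := ψ.fieldRange with hN
  let ψ' : M →+* ↥N := {
    toFun := fun m => ⟨ψ m, AlgHom.mem_fieldRange.mpr ⟨m, rfl⟩⟩
    map_one' := Subtype.ext (map_one ψ)
    map_mul' := fun a b => Subtype.ext (map_mul ψ a b)
    map_zero' := Subtype.ext (map_zero ψ)
    map_add' := fun a b => Subtype.ext (map_add ψ a b) }
  have hNalg : Algebra.IsAlgebraic K ↥N := by
    constructor
    rintro ⟨z, hz⟩
    obtain ⟨m, rfl⟩ := AlgHom.mem_fieldRange.mp hz
    have h1 : IsAlgebraic K (ψ m) := (Algebra.IsAlgebraic.isAlgebraic m).algHom ψ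
    exact (isAlgebraic_algHom_iff N.val Subtype.val_injective).mp h1
  have θinj : Function.Injective θ := by
    suffices h0 : ∀ p : M[X], θ p = 0 → p = 0 by
      intro p q h
      have := h0 (p - q) (by rw [map_sub, h, sub_self])
      exact sub_eq_zero.mp this
    intro p hp
    by_contra hp0
    have ψ'inj : Function.Injective ψ' := fun a b hab =>
      ψinj (congrArg Subtype.val hab)
    have halg : IsAlgebraic ↥N t := by
      refine ⟨p.map ψ', ?_, ?_⟩
      · exact (Polynomial.map_ne_zero_iff ψ'inj).mpr hp0
      · rw [Polynomial.aeval_def, Polynomial.eval₂_map]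
        have hcomp : (algebraMap ↥N Ω).comp ψ' = ψ.toRingHom := by
          ext m; rfl
        rw [hcomp]
        exact hp
    have : IsIntegral ↥N t := halg.isIntegral
    have hint : IsIntegral K t := isIntegral_trans t this
    exact ht hint.isAlgebraic
  -- the embedding of RatFunc M
  let f : RatFunc M →+* Ω := IsFractionRing.lift θinj
  have hfalg : ∀ p : M[X], f (algebraMap M[X] (RatFunc M) p) = θ p := fun p =>
    IsFractionRing.lift_algebraMap θinj p
  have hconst : ∀ m : M, f (algebraMap M (RatFunc M) m) = ψ m := by
    intro m
    have h1 : algebraMap M (RatFunc M) m = algebraMap M[X] (RatFunc M) (Polynomial.C m) := by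
      rw [RatFunc.algebraMap_C, ← RatFunc.algebraMap_eq_C]
    rw [h1, hfalg]
    simp [hθdef]
  have hX : f (algebraMap M[X] (RatFunc M) Polynomial.X) = t := by
    rw [hfalg]; simp [hθdef]
  have hKmem : ∀ c : K, algebraMap K Ω c ∈ f.fieldRange := by
    intro c
    refine RingHom.mem_fieldRange.mpr ⟨algebraMap M (RatFunc M) (algebraMap K M c), ?_⟩
    rw [hconst, ψ.commutes]
  set E : IntermediateField K Ω := Subfield.toIntermediateField f.fieldRange hKmem with hE
  have hmemE : ∀ r : RatFunc M, f r ∈ E := fun r => RingHom.mem_fieldRange.mpr ⟨r, rfl⟩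
  let g : RatFunc M →+* ↥E := {
    toFun := fun r => ⟨f r, hmemE r⟩
    map_one' := Subtype.ext (map_one f)
    map_mul' := fun a b => Subtype.ext (map_mul f a b)
    map_zero' := Subtype.ext (map_zero f)
    map_add' := fun a b => Subtype.ext (map_add f a b) }
  have gbij : Function.Bijective g := by
    constructor
    · exact fun a b h => f.injective (congrArg Subtype.val h)
    · rintro ⟨y, hy⟩
      obtain ⟨r, hr⟩ := RingHom.mem_fieldRange.mp hy
      exact ⟨r, Subtype.ext hr⟩
  let e : RatFunc M ≃+* ↥E := RingEquiv.ofBijective g gbij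
  -- basis of M over K
  let d := Module.finrank K M
  let b : Module.Basis (Fin d) K M := Module.finBasis K M
  -- generation lemma on the Ω side
  have gen : ∀ T : Subfield Ω, (∀ c : K, algebraMap K Ω c ∈ T) → (∀ i, ψ (b i) ∈ T) →
      t ∈ T → ∀ r : RatFunc M, f r ∈ T := by
    intro T hTK hTb hTt
    have hψm : ∀ m : M, ψ m ∈ T := by
      intro m
      have hm : m ∈ Submodule.span K (Set.range b) := by rw [b.span_eq]; trivial
      induction hm using Submodule.span_induction with
      | mem x hx => obtain ⟨i, rfl⟩ := hx; exact hTb i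
      | zero => rw [map_zero]; exact T.zero_mem
      | add x y _ _ hx hy => rw [map_add]; exact T.add_mem hx hy
      | smul c x _ hx =>
          rw [map_smul, Algebra.smul_def]
          exact T.mul_mem (hTK c) hx
    have hθp : ∀ p : M[X], θ p ∈ T := by
      intro p
      induction p using Polynomial.induction_on with
      | C m => simpa [hθdef] using hψm m
      | add p q hp hq => rw [map_add]; exact T.add_mem hp hq
      | monomial k m _ =>
          rw [map_mul]
          have h1 : θ (Polynomial.C m) = ψ m := by simp [hθdef]
          have h2 : θ (Polynomial.X ^ (k + 1)) = t ^ (k + 1) := by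
            rw [map_pow]; simp [hθdef]
          rw [h1, h2]
          exact T.mul_mem (hψm m) (T.pow_mem hTt _)
    intro r
    induction r using RatFunc.induction_on with
    | f p q hq =>
        rw [map_div₀, hfalg, hfalg]
        exact T.div_mem (hθp p) (hθp q)
  -- membership of key elements in E
  have hbE : ∀ i, ψ (b i) ∈ E := fun i => by
    rw [← hconst]; exact hmemE _
  have htE : t ∈ E := by rw [← hX]; exact hmemE _
  -- the master generation lemma for subfields of ↥E
  have main : ∀ T' : Subfield ↥E, (∀ c : K, algebraMap K ↥E c ∈ T') →
      (∀ i, (⟨ψ (b i), hbE i⟩ : ↥E) ∈ T') → (⟨t, htE⟩ : ↥E) ∈ T' → ∀ y : ↥E, y ∈ T' := by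
    intro T' h1 h2 h3 y
    set T : Subfield Ω := T'.map (E.val : ↥E →ₐ[K] Ω).toRingHom with hT
    have hTK : ∀ c : K, algebraMap K Ω c ∈ T := by
      intro c
      refine Subfield.mem_map.mpr ⟨algebraMap K ↥E c, h1 c, ?_⟩
      exact E.val.commutes c
    have hTb : ∀ i, ψ (b i) ∈ T := fun i =>
      Subfield.mem_map.mpr ⟨⟨ψ (b i), hbE i⟩, h2 i, rfl⟩
    have hTt : t ∈ T := Subfield.mem_map.mpr ⟨⟨t, htE⟩, h3, rfl⟩
    obtain ⟨r, hr⟩ := RingHom.mem_fieldRange.mp y.2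
    have hfr : f r ∈ T := gen T hTK hTb hTt r
    rw [hr] at hfr
    obtain ⟨z, hz, hval⟩ := Subfield.mem_map.mp hfr
    have : z = y := Subtype.val_injective hval
    rwa [this] at hz
  -- IsFunctionField1
  have hFF : IsFunctionField1 K ↥E := by
    constructor
    · -- finitely generated
      refine ⟨(Finset.univ.image fun i : Fin d => (⟨ψ (b i), hbE i⟩ : ↥E)) ∪
        {(⟨t, htE⟩ : ↥E)}, ?_⟩
      rw [eq_top_iff]
      intro y _
      rw [← IntermediateField.mem_toSubfield]
      refine main _ (fun c => ?_) (fun i => ?_) ?_ y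
      · exact (IntermediateField.adjoin K _).algebraMap_mem c
      · apply IntermediateField.subset_adjoin
        simp
      · apply IntermediateField.subset_adjoin
        simp
    · refine ⟨⟨t, htE⟩, ?_, ?_⟩
      · intro hax
        have := hax.algHom E.val
        exact ht this
      · set x : ↥E := ⟨t, htE⟩ with hx
        set A := IntermediateField.adjoin K {x} with hA
        set SB : Set ↥E := Set.range fun i : Fin d => (⟨ψ (b i), hbE i⟩ : ↥E) with hSB
        have hSBint : ∀ z ∈ SB, IsIntegral ↥A z := by
          rintro z ⟨i, rfl⟩
          have h1 : IsIntegral K (b i) := (Algebra.IsAlgebraic.isAlgebraic (b i)).isIntegral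
          have h2 : IsIntegral K (ψ (b i)) := h1.map ψ
          have h3 : IsIntegral K (⟨ψ (b i), hbE i⟩ : ↥E) :=
            (isIntegral_algHom_iff E.val Subtype.val_injective).mp h2
          exact h3.tower_top
        have htop : IntermediateField.adjoin ↥A SB = ⊤ := by
          rw [eq_top_iff]
          intro y _
          rw [← IntermediateField.mem_toSubfield]
          refine main _ (fun c => ?_) (fun i => ?_) ?_ y
          · rw [IsScalarTower.algebraMap_apply K ↥A ↥E c]
            exact (IntermediateField.adjoin ↥A SB).algebraMap_mem _
          · apply IntermediateField.subset_adjoin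
            exact ⟨i, rfl⟩
          · have hxA : x ∈ A := IntermediateField.subset_adjoin K _ rfl
            have : algebraMap ↥A ↥E ⟨x, hxA⟩ = x := rfl
            rw [← this]
            exact (IntermediateField.adjoin ↥A SB).algebraMap_mem _
        have halgSB : Algebra.IsAlgebraic ↥A ↥(IntermediateField.adjoin ↥A SB) :=
          IntermediateField.isAlgebraic_adjoin hSBint
        constructor
        intro y
        have hy : y ∈ IntermediateField.adjoin ↥A SB := by rw [htop]; trivial
        have h1 := halgSB.isAlgebraic ⟨y, hy⟩
        have h2 := h1.algHom (IntermediateField.adjoin ↥A SB).val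
        exact h2
  calc pythNum' (RatFunc M) = pythNum' ↥E := pythNum'_eq_of_equiv e
    _ ≤ pTilde K := by
        refine le_iSup_of_le E ?_
        exact le_iSup_of_le hFF le_rfl

end Embed

section helpers

theorem enat_le_of_forall_nat_lt {a b : ℕ∞} (h : ∀ n : ℕ, (n : ℕ∞) < a → (n : ℕ∞) < b) :
    a ≤ b := by
  by_contra hab
  push_neg at hab
  have hbt : b ≠ ⊤ := hab.ne_top
  lift b to ℕ using hbt
  exact absurd (h b hab) (lt_irrefl _)

variable {K L : Type u} [Field K] [Field L] [Algebra K L]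

/-- Lift a sum-of-squares representation into an intermediate field containing all data. -/
theorem isSumSqN_lift (L' : IntermediateField K L) {n : ℕ} {a : L} (ha : a ∈ L')
    (x : Fin n → L) (hx : ∀ i, x i ∈ L') (h : a = ∑ i, x i ^ 2) :
    IsSumSqN n (⟨a, ha⟩ : ↥L') := by
  refine ⟨fun i => ⟨x i, hx i⟩, ?_⟩
  apply Subtype.val_injective
  show a = ((∑ i, (⟨x i, hx i⟩ : ↥L') ^ 2 : ↥L') : L)
  rw [h]
  push_cast
  rfl

theorem ringChar_eq_of_injective {A B : Type*} [NonAssocSemiring A] [NonAssocSemiring B]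
    (f : A →+* B) (hf : Function.Injective f) : ringChar A = ringChar B := by
  have : CharP A (ringChar B) := by
    constructor
    intro n
    rw [← ringChar.spec B n, ← map_natCast f n]
    exact ⟨fun h => by rw [h, map_zero], fun h => hf (by rw [h, map_zero])⟩
  exact ringChar.eq A (ringChar B)

/-- A field that is not formally real has `-1` as a sum of squares...
    contrapositive: real fields have characteristic zero. -/
theorem charZero_of_not_isSOS_neg_one (h : ¬ IsSOS (-1 : L)) : CharZero L := by
  rcases CharP.char_is_prime_or_zero L (ringChar L) with hp | h0
  · exfalso
    apply h
    refine ⟨ringChar L - 1, fun _ => 1, ?_⟩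
    have hcast : ((ringChar L : ℕ) : L) = 0 := ringChar.spec L (ringChar L) |>.mpr dvd_rfl
    have h1 : ((ringChar L - 1 : ℕ) : L) = -1 := by
      rw [Nat.cast_sub hp.one_le, hcast]
      simp
    rw [← h1]
    simp [Finset.sum_const]
  · have : CharP L 0 := ringChar.of_eq h0
    exact CharP.charP_to_charZero L

end helpers


set_option synthInstance.maxHeartbeats 1000000 in
/-- For every algebraic field extension `L/K`, `p̃(K) ≥ p'(L)`. -/
theorem pythNum'_le_pTilde_of_isAlgebraic (K : Type u) [Field K] (L : Type u) [Field L]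
    [Algebra K L] [Algebra.IsAlgebraic K L] :
    pythNum' L ≤ pTilde K := by
  classical
  by_cases h2 : ringChar L = 2
  · -- characteristic 2
    have hchar : CharP L 2 := ringChar.of_eq h2
    have hle : pythNum' L ≤ 1 := by
      rw [pythNum', if_pos (Or.inr h2)]
      apply pythNum_le
      rintro a ⟨n, x, rfl⟩
      exact ⟨fun _ => ∑ i, x i, by simp [CharTwo.sum_sq]⟩
    exact hle.trans (one_le_pythNum'.trans (ratFunc_le_pTilde K K))
  by_cases hsos : IsSOS (-1 : L)
  · -- non-real case: p'(L) = s(L) + 1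
    have hne : ∃ m : ℕ, IsSumSqN m (-1 : L) := hsos
    set m₀ := Nat.find hne with hm₀
    obtain ⟨x, hx⟩ := Nat.find_spec hne
    -- the finite subextension
    set S : Set L := Set.range x with hS
    have hfin : S.Finite := Set.finite_range x
    haveI := hfin.to_subtype
    have hint : ∀ y ∈ S, IsIntegral K y := fun y _ =>
      (Algebra.IsAlgebraic.isAlgebraic y).isIntegral
    set L' := IntermediateField.adjoin K S with hL'
    haveI : FiniteDimensional K ↥L' := IntermediateField.finiteDimensional_adjoin hint
    set M := ↥L' with hM
    have hxmem : ∀ i, x i ∈ L' := fun i => IntermediateField.subset_adjoin K S ⟨i, rfl⟩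
    have hm1 : (-1 : L) ∈ L' := by
      exact L'.neg_mem L'.one_mem
    have hlift : IsSumSqN m₀ (-1 : M) := by
      have := isSumSqN_lift L' hm1 x hxmem hx
      have heq : (⟨-1, hm1⟩ : ↥L') = -1 := by
        apply Subtype.val_injective; push_cast; rfl
      rwa [heq] at this
    set F := RatFunc M with hF
    -- characters
    have hcharM : ringChar M = ringChar L :=
      ringChar_eq_of_injective (algebraMap M L) (algebraMap M L).injective
    have hcharF : ringChar F = ringChar M :=
      (ringChar_eq_of_injective (algebraMap M F) (algebraMap M F).injective).symm
    have hsosF : IsSOS (-1 : F) := by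
      have := (IsSOS.map (algebraMap M F) ⟨m₀, hlift⟩)
      simpa using this
    have hcond : ¬ (¬ IsSOS (-1 : F) ∨ ringChar F = 2) := by
      push_neg
      refine ⟨hsosF, ?_⟩
      rw [hcharF, hcharM]; exact h2
    have hlevF : levelN F = (m₀ : ℕ∞) := by
      apply le_antisymm
      · apply levelN_le
        have := hlift.map (algebraMap M F)
        simpa using this
      · apply le_levelN
        intro k hk
        have hk' : IsSumSqN k (-1 : M) := isSumSqN_neg_one_descent hk
        have hkL : IsSumSqN k (-1 : L) := by
          have := hk'.map (algebraMap M L)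
          simpa using this
        exact Nat.find_min' hne hkL
    have hlevL : levelN L = (m₀ : ℕ∞) := by
      apply le_antisymm
      · exact levelN_le (Nat.find_spec hne)
      · exact le_levelN fun k hk => Nat.find_min' hne hk
    have hL : pythNum' L = (m₀ : ℕ∞) + 1 := by
      rw [pythNum', if_neg (by push_neg; exact ⟨hsos, h2⟩), hlevL]
    have hFval : pythNum' F = (m₀ : ℕ∞) + 1 := by
      rw [pythNum', if_neg hcond, hlevF]
    rw [hL, ← hFval]
    exact ratFunc_le_pTilde K M
  · -- real case: p'(L) = p(L)
    haveI hchar0 : CharZero L := charZero_of_not_isSOS_neg_one hsos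
    rw [pythNum', if_pos (Or.inl hsos)]
    apply enat_le_of_forall_nat_lt
    intro n hn
    -- a witness that is an SOS but not a sum of n squares
    have hwit : ∃ a : L, IsSOS a ∧ ¬ IsSumSqN n a := by
      by_contra hall
      push_neg at hall
      exact absurd (pythNum_le fun a ha => (hall a ha)) (not_le.mpr hn)
    obtain ⟨a, ⟨k, y, hy⟩, hnot⟩ := hwit
    set S : Set L := insert a (Set.range y) with hS
    have hfin : S.Finite := (Set.finite_range y).insert a
    haveI := hfin.to_subtype
    have hint : ∀ z ∈ S, IsIntegral K z := fun z _ =>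
      (Algebra.IsAlgebraic.isAlgebraic z).isIntegral
    set L' := IntermediateField.adjoin K S with hL'
    haveI : FiniteDimensional K ↥L' := IntermediateField.finiteDimensional_adjoin hint
    set M := ↥L' with hM
    have haM : a ∈ L' := IntermediateField.subset_adjoin K S (Set.mem_insert a _)
    have hyM : ∀ i, y i ∈ L' := fun i =>
      IntermediateField.subset_adjoin K S (Set.mem_insert_of_mem _ ⟨i, rfl⟩)
    set a' : M := ⟨a, haM⟩ with ha'
    have ha'sos : IsSOS a' := ⟨k, isSumSqN_lift L' haM y hyM hy⟩
    have ha'not : ¬ IsSumSqN n a' := by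
      intro h
      have := h.map (algebraMap M L)
      exact hnot this
    haveI : CharZero M := ⟨fun p q hpq => by
      apply @Nat.cast_injective L _ _
      rw [← map_natCast (algebraMap M L) p, ← map_natCast (algebraMap M L) q, hpq]⟩
    set F := RatFunc M with hF
    have hnF : (n : ℕ∞) < pythNum F := by
      apply lt_pythNum (algebraMap M F a')
      · exact ha'sos.map (algebraMap M F)
      · intro h
        exact ha'not (isSumSqN_const_descent h)
    have hsosF : ¬ IsSOS (-1 : F) := by
      rintro ⟨m, hm⟩
      apply hsos
      have h1 : IsSumSqN m (-1 : M) := isSumSqN_neg_one_descent hm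
      have := h1.map (algebraMap M L)
      exact ⟨m, by simpa using this⟩
    have hFval : pythNum' F = pythNum F := by
      rw [pythNum', if_pos (Or.inl hsosF)]
    calc (n : ℕ∞) < pythNum F := hnF
      _ = pythNum' F := hFval.symm
      _ ≤ pTilde K := ratFunc_le_pTilde K M
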